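/- Let q be a prime power with q > 3. Then α_q^E(δ) = α_q^lin(δ) for every δ ∈ [0,1]; that is, the largest asymptotic information rate achievable by Euclidean LCD codes over F_q at asymptotic relative minimum distance δ equals that achievable by arbitrary linear codes over F_q. -/

import Mathlib

open Matrix Filter

/-- The Euclidean dual of a linear code. -/
def dualCode {F : Type*} [Field F] {ι : Type*} [Fintype ι]
    (C : Submodule F (ι → F)) : Submodule F (ι → F) where
  carrier := {b | ∀ c ∈ C, b ⬝ᵥ c = 0}
  add_mem' := by
    intro a b ha hb c hc
    simp [add_dotProduct, ha c hc, hb c hc]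
  zero_mem' := by
    intro c hc
    simp
  smul_mem' := by
    intro r a ha c hc
    simp [smul_dotProduct, ha c hc]

/-- The minimum (Hamming) distance of a linear code. -/
noncomputable def minDist {F : Type*} [Field F] [DecidableEq F] {ι : Type*} [Fintype ι]
    (C : Submodule F (ι → F)) : ℕ :=
  sInf {w | ∃ c ∈ C, c ≠ 0 ∧ hammingNorm c = w}

/-- `ULin F` is the set of pairs `(δ, R) ∈ [0,1]²` for which there is a
sequence of `[nᵢ, kᵢ, dᵢ]` linear codes over `F` with `nᵢ → ∞`,
`dᵢ/nᵢ → δ` and `kᵢ/nᵢ → R`. -/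
def ULin (F : Type*) [Field F] [Fintype F] [DecidableEq F] : Set (ℝ × ℝ) :=
  {p | p ∈ Set.Icc (0 : ℝ) 1 ×ˢ Set.Icc (0 : ℝ) 1 ∧
    ∃ (nn kk dd : ℕ → ℕ) (C : (i : ℕ) → Submodule F (Fin (nn i) → F)),
      (∀ i, Module.finrank F (C i) = kk i) ∧
      (∀ i, minDist (C i) = dd i) ∧
      Tendsto nn atTop atTop ∧
      Tendsto (fun i => (dd i : ℝ) / (nn i : ℝ)) atTop (nhds p.1) ∧
      Tendsto (fun i => (kk i : ℝ) / (nn i : ℝ)) atTop (nhds p.2)}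

/-- `UE F` is the analogous set where all codes in the sequence are required
to be Euclidean LCD codes. -/
def UE (F : Type*) [Field F] [Fintype F] [DecidableEq F] : Set (ℝ × ℝ) :=
  {p | p ∈ Set.Icc (0 : ℝ) 1 ×ˢ Set.Icc (0 : ℝ) 1 ∧
    ∃ (nn kk dd : ℕ → ℕ) (C : (i : ℕ) → Submodule F (Fin (nn i) → F)),
      (∀ i, Module.finrank F (C i) = kk i) ∧
      (∀ i, minDist (C i) = dd i) ∧
      (∀ i, C i ⊓ dualCode (C i) = ⊥) ∧
      Tendsto nn atTop atTop ∧
      Tendsto (fun i => (dd i : ℝ) / (nn i : ℝ)) atTop (nhds p.1) ∧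
      Tendsto (fun i => (kk i : ℝ) / (nn i : ℝ)) atTop (nhds p.2)}

/-- `α_q^lin(δ)`: the largest asymptotic information rate of linear codes over
`F` at asymptotic relative minimum distance `δ`. -/
noncomputable def alphaLin (F : Type*) [Field F] [Fintype F] [DecidableEq F]
    (δ : ℝ) : ℝ :=
  sSup {R : ℝ | R ∈ Set.Icc (0 : ℝ) 1 ∧ (δ, R) ∈ ULin F}

/-- `α_q^E(δ)`: the largest asymptotic information rate of Euclidean LCD codes
over `F` at asymptotic relative minimum distance `δ`. -/
noncomputable def alphaE (F : Type*) [Field F] [Fintype F] [DecidableEq F]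
    (δ : ℝ) : ℝ :=
  sSup {R : ℝ | R ∈ Set.Icc (0 : ℝ) 1 ∧ (δ, R) ∈ UE F}

lemma det_affine {F : Type*} [Field F] {k : ℕ} (A : Matrix (Fin k) (Fin k) F) (u w : Fin k → F) :
    ∃ a β : F, ∀ t : F, (Matrix.of fun i => A i + (t * u i) • w).det = a + β * t := by
  classical
  set Ms : Finset (Fin k) → F → Matrix (Fin k) (Fin k) F :=
    fun s t => Matrix.of fun i => if i ∈ s then A i + (t * u i) • w else A i with hMs
  have hins : ∀ (s : Finset (Fin k)) (j : Fin k), j ∉ s → ∀ t,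
      Ms (insert j s) t = (Ms s t).updateRow j (A j + (t * u j) • w) := by
    intro s j hj t
    ext i x
    by_cases hij : i = j
    · subst hij; simp [hMs, Matrix.updateRow_apply]
    · simp [hMs, Matrix.updateRow_apply, hij, Finset.mem_insert]
  -- Claim 1 : det of Ms with a row replaced by w is constant in t
  have C1 : ∀ (s : Finset (Fin k)) (j : Fin k), j ∉ s → ∀ t,
      ((Ms s t).updateRow j w).det = ((Ms s 0).updateRow j w).det := by
    intro s
    induction s using Finset.induction_on with
    | empty => intro j _ t; simp [hMs]
    | @insert i s' his IH =>
      intro j hj t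
      have hji : j ≠ i := by intro h; subst h; exact hj (Finset.mem_insert_self j s')
      have hjs : j ∉ s' := fun h => hj (Finset.mem_insert_of_mem h)
      have key : ∀ t' : F, ((Ms (insert i s') t').updateRow j w).det
          = ((Ms s' t').updateRow j w).det := by
        intro t'
        rw [hins s' i his t']
        have comm : ((Ms s' t').updateRow i (A i + (t' * u i) • w)).updateRow j w
            = (((Ms s' t').updateRow j w).updateRow i (A i + (t' * u i) • w)) := by
          ext a x
          by_cases haj : a = j
          · subst haj; simp [Matrix.updateRow_apply, hji]
          · by_cases hai : a = i
            · subst hai; simp [Matrix.updateRow_apply, hji, haj]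
            · simp [Matrix.updateRow_apply, haj, hai]
        rw [comm, Matrix.det_updateRow_add, Matrix.det_updateRow_smul]
        have hzero : ((((Ms s' t').updateRow j w)).updateRow i w).det = 0 := by
          apply Matrix.det_zero_of_row_eq hji.symm
          simp [Matrix.updateRow_apply, hji.symm, hji]
        rw [hzero, mul_zero, add_zero]
        congr 1
        have : ((Ms s' t').updateRow j w) i = A i := by
          rw [Matrix.updateRow_ne (Ne.symm hji)]
          exact if_neg his
        nth_rewrite 1 [← this]
        exact Matrix.updateRow_eq_self _ _
      rw [key t, key 0, IH j hjs t]
  -- Claim 2 : det of Ms is affine in t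
  have C2 : ∀ s : Finset (Fin k), ∃ a β : F, ∀ t, (Ms s t).det = a + β * t := by
    intro s
    induction s using Finset.induction_on with
    | empty => exact ⟨(Ms ∅ 0).det, 0, fun t => by simp [hMs]⟩
    | @insert j s' hjs IH =>
      obtain ⟨a, β, hab⟩ := IH
      refine ⟨a, β + u j * ((Ms s' 0).updateRow j w).det, fun t => ?_⟩
      rw [hins s' j hjs t, Matrix.det_updateRow_add, Matrix.det_updateRow_smul]
      have : (Ms s' t).updateRow j (A j) = Ms s' t := by
        have : (Ms s' t) j = A j := if_neg hjs
        nth_rewrite 1 [← this]; exact Matrix.updateRow_eq_self _ _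
      rw [this, hab t, C1 s' j hjs t]
      ring
  obtain ⟨a, β, hab⟩ := C2 Finset.univ
  exact ⟨a, β, fun t => by rw [← hab t]; congr 1; ext i x; simp [hMs]⟩

lemma select_grid {F : Type*} [Field F] {n : ℕ} (f : (Fin n → F) → F)
    (haff : ∀ (j : Fin n) (d : Fin n → F), ∃ a β : F,
      ∀ t, f (Function.update d j t) = a + β * t)
    (S : Fin n → Finset F) (hS : ∀ j, 1 < (S j).card)
    (d₀ : Fin n → F) (h0 : f d₀ ≠ 0) :
    ∃ d : Fin n → F, (∀ j, d j ∈ S j) ∧ f d ≠ 0 := by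
  classical
  have key : ∀ s : Finset (Fin n), ∃ d : Fin n → F,
      (∀ j ∈ s, d j ∈ S j) ∧ (∀ j ∉ s, d j = d₀ j) ∧ f d ≠ 0 := by
    intro s
    induction s using Finset.induction_on with
    | empty => exact ⟨d₀, by simp, fun _ _ => rfl, h0⟩
    | @insert j s' hjs IH =>
      obtain ⟨d, h1, h2, h3⟩ := IH
      obtain ⟨a, β, hab⟩ := haff j d
      have hne : ∃ t₀, a + β * t₀ ≠ 0 :=
        ⟨d j, by rw [← hab (d j), Function.update_eq_self]; exact h3⟩
      have : ∃ t ∈ S j, a + β * t ≠ 0 := by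
        by_contra hcon
        push_neg at hcon
        obtain ⟨t₁, ht₁, t₂, ht₂, h12⟩ := Finset.one_lt_card.mp (hS j)
        obtain ⟨t₀, ht₀⟩ := hne
        have hb : β = 0 := by
          have e1 := hcon t₁ ht₁
          have e2 := hcon t₂ ht₂
          have : β * (t₁ - t₂) = 0 := by ring_nf; linear_combination e1 - e2
          rcases mul_eq_zero.mp this with h | h
          · exact h
          · exact absurd (sub_eq_zero.mp h) h12
        have ha : a = 0 := by have := hcon t₁ ht₁; rw [hb] at this; simpa using this
        exact ht₀ (by rw [ha, hb]; ring)
      obtain ⟨t, htS, htne⟩ := this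
      refine ⟨Function.update d j t, ?_, ?_, ?_⟩
      · intro i hi
        rcases Finset.mem_insert.mp hi with h | h
        · subst h; rwa [Function.update_self]
        · have hij : i ≠ j := by rintro rfl; exact hjs h
          rw [Function.update_of_ne hij]
          exact h1 i h
      · intro i hi
        have hij : i ≠ j := fun he => hi (he ▸ Finset.mem_insert_self j s')
        rw [Function.update_of_ne hij]
        exact h2 i (fun h => hi (Finset.mem_insert_of_mem h))
      · rw [hab t]; exact htne
  obtain ⟨d, h1, _, h3⟩ := key Finset.univ
  exact ⟨d, fun j => h1 j (Finset.mem_univ j), h3⟩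

lemma exists_base_point {F : Type*} [Field F] {k n : ℕ} {b : Fin k → (Fin n → F)}
    (hb : LinearIndependent F b) :
    ∃ d₀ : Fin n → F,
      (Matrix.of fun i i' => ∑ s, d₀ s * b i s * b i' s).det ≠ 0 := by
  classical
  rcases Nat.eq_zero_or_pos k with hk | hk
  · subst hk
    exact ⟨0, by rw [Matrix.det_fin_zero]; exact one_ne_zero⟩
  haveI : Nonempty (Fin k) := ⟨⟨0, hk⟩⟩
  set G : Matrix (Fin k) (Fin n) F := Matrix.of fun i s => b i s with hG
  have hbG : LinearIndependent F G := hb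
  have hrank : G.rank = k := by simpa using hbG.rank_matrix
  have hspanc : Submodule.span F (Set.range Gᵀ) = ⊤ := by
    apply Submodule.eq_top_of_finrank_eq
    rw [show Set.range Gᵀ = Set.range G.col from rfl, ← Matrix.rank_eq_finrank_span_cols, hrank, Module.finrank_fin_fun]
  obtain ⟨bs, hsub, hspan, hli⟩ := exists_linearIndependent F (Set.range Gᵀ)
  rw [hspanc] at hspan
  have hfin : bs.Finite := hli.setFinite
  haveI := hfin.fintype
  have hcard : Fintype.card bs = k := by
    have B : Module.Basis bs F (Fin k → F) := Module.Basis.mk hli (by rw [Subtype.range_val, hspan])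
    rw [← Module.finrank_eq_card_basis B, Module.finrank_fin_fun]
  set e : Fin k ≃ bs := (Fintype.equivFinOfCardEq hcard).symm with he
  have hmem : ∀ x : bs, ∃ s : Fin n, Gᵀ s = (x : Fin k → F) := fun x => hsub x.2
  set σ : Fin k → Fin n := fun i => (hmem (e i)).choose with hσdef
  have hσ : ∀ i, Gᵀ (σ i) = (e i : Fin k → F) := fun i => (hmem (e i)).choose_spec
  have hσinj : Function.Injective σ := by
    intro i i' h
    have : (e i : Fin k → F) = (e i' : Fin k → F) := by rw [← hσ i, ← hσ i', h]
    exact e.injective (Subtype.ext this)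
  set Mσ : Matrix (Fin k) (Fin k) F := Matrix.of fun i i' => b i (σ i') with hMσ
  have hcomp : LinearIndependent F (((↑) : bs → (Fin k → F)) ∘ e) :=
    hli.comp e e.injective
  have hMσeq : Mσ = (Pi.basisFun F (Fin k)).toMatrix (((↑) : bs → (Fin k → F)) ∘ e) := by
    ext i j
    rw [Module.Basis.toMatrix_apply, Pi.basisFun_repr]
    show b i (σ j) = (e j : Fin k → F) i
    rw [← hσ j]; rfl
  have hdetσ : Mσ.det ≠ 0 := by
    set hB2 : Module.Basis (Fin k) F (Fin k → F) :=
      basisOfLinearIndependentOfCardEqFinrank hcomp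
        (by rw [Fintype.card_fin, Module.finrank_fin_fun]) with hB2def
    have hc : (((↑) : bs → (Fin k → F)) ∘ e) = ⇑hB2 :=
      (coe_basisOfLinearIndependentOfCardEqFinrank hcomp _).symm
    rw [hMσeq, hc]
    have : Invertible ((Pi.basisFun F (Fin k)).toMatrix ⇑hB2) :=
      Module.Basis.invertibleToMatrix (Pi.basisFun F (Fin k)) hB2
    have := Matrix.isUnit_det_of_invertible ((Pi.basisFun F (Fin k)).toMatrix ⇑hB2)
    exact this.ne_zero
  refine ⟨fun s => if s ∈ Finset.image σ Finset.univ then (1 : F) else 0, ?_⟩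
  have hM : (Matrix.of fun i i' => ∑ s, (if s ∈ Finset.image σ Finset.univ then (1:F) else 0) * b i s * b i' s) = Mσ * Mσᵀ := by
    ext i i'
    show (∑ s, (if s ∈ Finset.image σ Finset.univ then (1:F) else 0) * b i s * b i' s) = _
    have : ∀ s : Fin n, (if s ∈ Finset.image σ Finset.univ then (1:F) else 0) * b i s * b i' s
        = if s ∈ Finset.image σ Finset.univ then b i s * b i' s else 0 := by
      intro s; split <;> simp
    rw [Finset.sum_congr rfl (fun s _ => this s), Finset.sum_ite_mem, Finset.univ_inter,
      Finset.sum_image (fun x _ y _ h => hσinj h)]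
    simp [Matrix.mul_apply, hMσ, Matrix.transpose_apply]
  rw [hM, Matrix.det_mul, Matrix.det_transpose]
  exact mul_ne_zero hdetσ hdetσ

lemma exists_lcd_equiv {F : Type*} [Field F] [Fintype F] [DecidableEq F]
    (hF : 3 < Fintype.card F) {n : ℕ} (C : Submodule F (Fin n → F)) :
    ∃ C' : Submodule F (Fin n → F),
      Module.finrank F C' = Module.finrank F C ∧ minDist C' = minDist C ∧
        C' ⊓ dualCode C' = ⊥ := by
  classical
  -- pick c outside {0, 1, -1}
  obtain ⟨c, hc⟩ : ∃ c : F, c ∉ ({0, 1, -1} : Finset F) := by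
    by_contra hcon
    push_neg at hcon
    have h1 : (Finset.univ : Finset F) ⊆ ({0, 1, -1} : Finset F) := fun x _ => hcon x
    have h2 := Finset.card_le_card h1
    have h3 : ({0, 1, -1} : Finset F).card ≤ 3 := by
      apply le_trans (Finset.card_insert_le _ _)
      simp [Finset.card_insert_le]
      exact lt_of_le_of_lt (Finset.card_insert_le _ _) (by simp)
    rw [Finset.card_univ] at h2
    omega
  simp only [Finset.mem_insert, Finset.mem_singleton, not_or] at hc
  obtain ⟨hc0, hc1, hcm1⟩ := hc
  have hcsq : c ^ 2 ≠ 1 := by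
    intro h
    have : (c - 1) * (c + 1) = 0 := by ring_nf; linear_combination h
    rcases mul_eq_zero.mp this with h | h
    · exact hc1 (by linear_combination h)
    · exact hcm1 (by linear_combination h)
  -- basis of C
  set k := Module.finrank F C with hk
  set β : Module.Basis (Fin k) F C := Module.finBasis F C with hβ
  set b : Fin k → (Fin n → F) := fun i => (β i : Fin n → F) with hbdef
  have hb : LinearIndependent F b :=
    β.linearIndependent.map' C.subtype (Submodule.ker_subtype C)
  have hspanb : Submodule.span F (Set.range b) = C := by
    have : Set.range b = C.subtype '' Set.range β := by
      rw [← Set.range_comp]; rfl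
    rw [this, Submodule.span_image, β.span_eq, Submodule.map_subtype_top]
  -- the Gram-type matrix
  set Mf : (Fin n → F) → Matrix (Fin k) (Fin k) F :=
    fun d => Matrix.of fun i i' => ∑ s, d s * b i s * b i' s with hMf
  -- affine in each coordinate
  have haff : ∀ (j : Fin n) (d : Fin n → F), ∃ a γ : F,
      ∀ t, (Mf (Function.update d j t)).det = a + γ * t := by
    intro j d
    obtain ⟨a, γ, h⟩ := det_affine (Mf (Function.update d j 0))
      (fun i => b i j) (fun i' => b i' j)
    refine ⟨a, γ, fun t => ?_⟩
    rw [← h t]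
    congr 1
    ext i i'
    show (∑ s, Function.update d j t s * b i s * b i' s)
        = (∑ s, Function.update d j 0 s * b i s * b i' s) + (t * b i j) * b i' j
    have : ∀ s : Fin n, Function.update d j t s * b i s * b i' s
        = Function.update d j 0 s * b i s * b i' s
          + (if s = j then (t * b i j) * b i' j else 0) := by
      intro s
      rcases eq_or_ne s j with rfl | hsj
      · simp [Function.update_self]
      · simp [Function.update_of_ne hsj, hsj]
    rw [Finset.sum_congr rfl (fun s _ => this s), Finset.sum_add_distrib,
      Finset.sum_ite_eq' Finset.univ j (fun _ => (t * b i j) * b i' j)]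
    simp
  -- base point
  obtain ⟨d₀, hd₀⟩ := exists_base_point hb
  -- selection
  obtain ⟨d, hdS, hdet⟩ := select_grid (fun d => (Mf d).det) haff
    (fun _ => ({1, c ^ 2} : Finset F))
    (fun _ => by
      rw [Finset.card_insert_of_notMem (by simpa using fun h => hcsq h.symm)]
      simp)
    d₀ hd₀
  -- square roots
  set v : Fin n → F := fun s => if d s = 1 then 1 else c with hvdef
  have hv0 : ∀ s, v s ≠ 0 := by
    intro s; rw [hvdef]; dsimp only; split
    · exact one_ne_zero
    · exact hc0
  have hv2 : ∀ s, v s * v s = d s := by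
    intro s
    rcases Finset.mem_insert.mp (hdS s) with h | h
    · simp [hvdef, h]
    · rw [Finset.mem_singleton] at h
      have hne : d s ≠ 1 := by rw [h]; exact fun hh => hcsq hh
      show (if d s = 1 then (1:F) else c) * (if d s = 1 then (1:F) else c) = d s
      rw [if_neg hne, h]; ring
  -- the scaling equivalence
  set e : (Fin n → F) ≃ₗ[F] (Fin n → F) :=
    { toFun := fun x => fun t => v t * x t
      map_add' := by intro x y; funext t; simp [mul_add]
      map_smul' := by intro r x; funext t; simp; ring
      invFun := fun x => fun t => (v t)⁻¹ * x t
      left_inv := fun x => by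
        funext t; simp; rw [← mul_assoc, inv_mul_cancel₀ (hv0 t), one_mul]
      right_inv := fun x => by
        funext t; simp; rw [← mul_assoc, mul_inv_cancel₀ (hv0 t), one_mul] } with hedef
  have heapp : ∀ (x : Fin n → F) (t : Fin n), e x t = v t * x t := fun _ _ => rfl
  set C' : Submodule F (Fin n → F) := Submodule.map (e : (Fin n → F) →ₗ[F] (Fin n → F)) C
    with hC'
  have hnorm : ∀ x : Fin n → F, hammingNorm (e x) = hammingNorm x := by
    intro x
    unfold hammingNorm
    congr 1
    ext t
    simp only [Finset.mem_filter, Finset.mem_univ, true_and, heapp]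
    constructor
    · intro h hh; exact h (by rw [hh, mul_zero])
    · intro h; exact mul_ne_zero (hv0 t) h
  have hezero : ∀ x : Fin n → F, e x = 0 ↔ x = 0 := by
    intro x
    constructor
    · intro h
      have := congrArg e.symm h
      simpa using this
    · rintro rfl; exact map_zero _
  refine ⟨C', ?_, ?_, ?_⟩
  · exact LinearEquiv.finrank_map_eq e C
  · unfold minDist
    congr 1
    ext w
    constructor
    · rintro ⟨cc, hmem, hne, hw⟩
      obtain ⟨z, hz, rfl⟩ := Submodule.mem_map.mp hmem
      refine ⟨z, hz, ?_, by rw [← hw]; exact (hnorm z).symm⟩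
      intro hzz; exact hne (by rw [hzz]; exact map_zero _)
    · rintro ⟨z, hz, hne, hw⟩
      exact ⟨e z, Submodule.mem_map_of_mem hz, fun h => hne ((hezero z).mp h),
        by rw [hnorm z, hw]⟩
  · rw [eq_bot_iff]
    intro x hx
    rw [Submodule.mem_bot]
    obtain ⟨hx1, hx2⟩ := Submodule.mem_inf.mp hx
    obtain ⟨z, hz, rfl⟩ := Submodule.mem_map.mp hx1
    rw [← hspanb] at hz
    obtain ⟨y, hy⟩ := Submodule.mem_span_range_iff_exists_fun F |>.mp hz
    have hzt : ∀ t, z t = ∑ i, y i * b i t := by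
      intro t
      rw [← hy]
      simp [Finset.sum_apply]
    -- dual condition against e (b i')
    have hvm : ∀ i', ∑ i, y i * (Mf d) i i' = 0 := by
      intro i'
      have hbmem : b i' ∈ C := by rw [hbdef]; exact SetLike.coe_mem (β i')
      have h1 : (e z) ⬝ᵥ (e (b i')) = 0 :=
        hx2 (e (b i')) (Submodule.mem_map_of_mem hbmem)
      rw [← h1]
      show ∑ i, y i * (∑ s, d s * b i s * b i' s) = ∑ t, (e z t) * (e (b i') t)
      have : ∀ t, (e z t) * (e (b i') t) = ∑ i, y i * (d t * b i t * b i' t) := by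
        intro t
        rw [heapp, heapp, hzt t, Finset.mul_sum, Finset.sum_mul]
        apply Finset.sum_congr rfl
        intro i _
        have := hv2 t
        ring_nf
        nth_rewrite 1 [← this]
        ring
      rw [Finset.sum_congr rfl (fun t _ => this t), Finset.sum_comm]
      apply Finset.sum_congr rfl
      intro i _
      rw [Finset.mul_sum]
    have hyv : Matrix.vecMul y (Mf d) = 0 := by
      funext j
      exact hvm j
    have hMu : IsUnit (Mf d).det := isUnit_iff_ne_zero.mpr hdet
    have hy0 : y = 0 := by
      have h2 := congrArg (fun zz => Matrix.vecMul zz (Mf d)⁻¹) hyv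
      simpa [Matrix.vecMul_vecMul, Matrix.mul_nonsing_inv _ hMu] using h2
    have hz0 : z = 0 := by
      rw [← hy, hy0]
      simp
    rw [hz0]
    exact map_zero _


lemma UE_eq_ULin (F : Type*) [Field F] [Fintype F] [DecidableEq F]
    (hF : 3 < Fintype.card F) : UE F = ULin F := by
  ext p
  constructor
  · rintro ⟨hp, nn, kk, dd, C, h1, h2, _, h4, h5, h6⟩
    exact ⟨hp, nn, kk, dd, C, h1, h2, h4, h5, h6⟩
  · rintro ⟨hp, nn, kk, dd, C, h1, h2, h4, h5, h6⟩
    choose C' hk hd hlcd using fun i => exists_lcd_equiv hF (C i)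
    exact ⟨hp, nn, kk, dd, C', fun i => (hk i).trans (h1 i),
      fun i => (hd i).trans (h2 i), hlcd, h4, h5, h6⟩

/-- For a prime power `q > 3`, Euclidean LCD codes over `F_q` achieve the same
asymptotic rate/distance trade-off as arbitrary linear codes:
`α_q^E(δ) = α_q^lin(δ)` for every `δ ∈ [0,1]`. -/
theorem alphaE_eq_alphaLin
    (q : ℕ) (hq : ∃ p m : ℕ, p.Prime ∧ 0 < m ∧ q = p ^ m) (hq3 : 3 < q)
    (F : Type*) [Field F] [Fintype F] [DecidableEq F] (hcard : Fintype.card F = q)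
    (δ : ℝ) (hδ : δ ∈ Set.Icc (0 : ℝ) 1) :
    alphaE F δ = alphaLin F δ := by
  have hF : 3 < Fintype.card F := by rw [hcard]; exact hq3
  unfold alphaE alphaLin
  rw [UE_eq_ULin F hF]
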